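/- Every subdirect embedding A → ∏_{i=1}^n A_i can be refined to a subdirect product-essential embedding: there exist congruences φ̄_i on A_i such that the induced map A → ∏_{i=1}^n A_i/φ̄_i is a subdirect product-essential embedding. -/
import Mathlib


/-- An algebraic signature: a type of operation symbols with finite arities. -/
structure Signature where
  ops : Type
  arity : ops → ℕ

/-- An algebra for a signature. -/
structure SAlgebra (S : Signature) where
  carrier : Type
  interp : (o : S.ops) → (Fin (S.arity o) → carrier) → carrier

namespace SAlgebra

variable {S : Signature}

/-- Binary product of algebras. -/
def prod (A B : SAlgebra S) : SAlgebra S where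
  carrier := A.carrier × B.carrier
  interp o x := (A.interp o fun i => (x i).1, B.interp o fun i => (x i).2)

/-- Product of a family of algebras. -/
def pi {ι : Type} (A : ι → SAlgebra S) : SAlgebra S where
  carrier := ∀ i, (A i).carrier
  interp o x i := (A i).interp o fun j => x j i

end SAlgebra

/-- Homomorphisms of algebras. -/
structure SHom {S : Signature} (A B : SAlgebra S) where
  toFun : A.carrier → B.carrier
  map : ∀ (o : S.ops) (x : Fin (S.arity o) → A.carrier),
    toFun (A.interp o x) = B.interp o fun i => toFun (x i)

namespace SHom

variable {S : Signature}

/-- Composition of homomorphisms. -/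
def comp {A B C : SAlgebra S} (g : SHom B C) (f : SHom A B) : SHom A C where
  toFun := g.toFun ∘ f.toFun
  map o x := by simp [Function.comp, f.map, g.map]

/-- The `i`-th projection of a product. -/
def proj {ι : Type} (A : ι → SAlgebra S) (i : ι) : SHom (SAlgebra.pi A) (A i) where
  toFun x := x i
  map _ _ := rfl

end SHom

/-- Congruences of an algebra. -/
structure SCon {S : Signature} (A : SAlgebra S) where
  r : A.carrier → A.carrier → Prop
  iseqv : Equivalence r
  compat : ∀ (o : S.ops) (x y : Fin (S.arity o) → A.carrier),
    (∀ i, r (x i) (y i)) → r (A.interp o x) (A.interp o y)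

namespace SCon

variable {S : Signature} {A : SAlgebra S}

instance : PartialOrder (SCon A) where
  le c d := ∀ x y, c.r x y → d.r x y
  le_refl _ _ _ h := h
  le_trans _ _ _ h h' x y hx := h' x y (h x y hx)
  le_antisymm a b h h' := by
    cases a; cases b
    have : ∀ x y : A.carrier, _ ↔ _ := fun x y => Iff.intro (h x y) (h' x y)
    simp only [SCon.mk.injEq]
    funext x y
    exact propext (this x y)

instance : InfSet (SCon A) :=
  ⟨fun s =>
    { r := fun x y => ∀ c ∈ s, c.r x y
      iseqv := ⟨fun x c _ => c.iseqv.refl x, fun h c hc => c.iseqv.symm (h c hc),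
        fun h1 h2 c hc => c.iseqv.trans (h1 c hc) (h2 c hc)⟩
      compat := fun o x y h c hc => c.compat o x y fun i => h i c hc }⟩

instance : CompleteLattice (SCon A) :=
  completeLatticeOfInf _ (fun s =>
    ⟨fun c hc x y h => h c hc, fun b hb x y h c hc => hb hc x y h⟩)

/-- Restriction (inverse image) of a congruence along a homomorphism. -/
def comap {B : SAlgebra S} (f : SHom A B) (θ : SCon B) : SCon A where
  r x y := θ.r (f.toFun x) (f.toFun y)
  iseqv := ⟨fun _ => θ.iseqv.refl _, θ.iseqv.symm, θ.iseqv.trans⟩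
  compat o x y h := by
    show θ.r (f.toFun (A.interp o x)) (f.toFun (A.interp o y))
    rw [f.map, f.map]
    exact θ.compat o _ _ h

/-- Product of two congruences. -/
def prodCon {A B : SAlgebra S} (φ : SCon A) (ψ : SCon B) : SCon (A.prod B) where
  r x y := φ.r x.1 y.1 ∧ ψ.r x.2 y.2
  iseqv := ⟨fun _ => ⟨φ.iseqv.refl _, ψ.iseqv.refl _⟩,
    fun h => ⟨φ.iseqv.symm h.1, ψ.iseqv.symm h.2⟩,
    fun h h' => ⟨φ.iseqv.trans h.1 h'.1, ψ.iseqv.trans h.2 h'.2⟩⟩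
  compat o x y h := ⟨φ.compat o _ _ fun i => (h i).1, ψ.compat o _ _ fun i => (h i).2⟩

/-- Product of a family of congruences. -/
def piCon {ι : Type} {A : ι → SAlgebra S} (φ : ∀ i, SCon (A i)) : SCon (SAlgebra.pi A) where
  r x y := ∀ i, (φ i).r (x i) (y i)
  iseqv := ⟨fun _ i => (φ i).iseqv.refl _, fun h i => (φ i).iseqv.symm (h i),
    fun h h' i => (φ i).iseqv.trans (h i) (h' i)⟩
  compat o x y h i := (φ i).compat o _ _ fun j => h j i

end SCon

/-- Terms in `n` variables over a signature. -/
inductive STerm (S : Signature) : ℕ → Type where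
  | var : {n : ℕ} → Fin n → STerm S n
  | app : {n : ℕ} → (o : S.ops) → (Fin (S.arity o) → STerm S n) → STerm S n

/-- Evaluation of a term in an algebra. -/
def STerm.eval {S : Signature} (A : SAlgebra S) {n : ℕ} : STerm S n → (Fin n → A.carrier) → A.carrier
  | .var i, x => x i
  | .app o t, x => A.interp o fun j => (t j).eval A x

/-- The term-condition centralizer relation `C(α, β; δ)`. -/
def Centralizes {S : Signature} (A : SAlgebra S) (α β δ : SCon A) : Prop :=
  ∀ (n m : ℕ) (t : STerm S (n + m)) (a b : Fin n → A.carrier) (u v : Fin m → A.carrier),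
    (∀ i, α.r (a i) (b i)) → (∀ j, β.r (u j) (v j)) →
    δ.r (t.eval A (Fin.append a u)) (t.eval A (Fin.append a v)) →
    δ.r (t.eval A (Fin.append b u)) (t.eval A (Fin.append b v))

/-- The commutator `[α, β]`: the least congruence `δ` with `C(α, β; δ)`. -/
def conCommutator {S : Signature} (A : SAlgebra S) (α β : SCon A) : SCon A :=
  sInf {δ | Centralizes A α β δ}

/-- The center of an algebra: the largest central congruence. -/
def conCenter {S : Signature} (A : SAlgebra S) : SCon A :=
  sSup {θ | conCommutator A θ ⊤ = ⊥}

/-- A class of algebras is a variety iff it is closed under subalgebras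
(isomorphic copies included), homomorphic images and products. -/
def IsVariety {S : Signature} (V : SAlgebra S → Prop) : Prop :=
  (∀ (A B : SAlgebra S) (e : SHom A B), Function.Injective e.toFun → V B → V A) ∧
  (∀ (A B : SAlgebra S) (p : SHom A B), Function.Surjective p.toFun → V A → V B) ∧
  (∀ (ι : Type) (A : ι → SAlgebra S), (∀ i, V (A i)) → V (SAlgebra.pi A))

/-- A congruence modular variety. -/
def IsCongruenceModularVariety {S : Signature} (V : SAlgebra S → Prop) : Prop :=
  IsVariety V ∧ ∀ A : SAlgebra S, V A → IsModularLattice (SCon A)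

/-- A Gumm difference term for the class `V`:  `d(x,y,y) = x` holds identically,
and `d(x,x,y) = y` whenever `x θ y` for an abelian congruence `θ`. -/
def IsGummDifferenceTerm {S : Signature} (V : SAlgebra S → Prop) (d : STerm S 3) : Prop :=
  (∀ A : SAlgebra S, V A → ∀ x y : A.carrier, d.eval A ![x, y, y] = x) ∧
  (∀ A : SAlgebra S, V A → ∀ θ : SCon A, conCommutator A θ θ = ⊥ →
    ∀ x y : A.carrier, θ.r x y → d.eval A ![x, x, y] = y)

/-- `R` is an absolute retract in `V`: every embedding of `R` into a member of `V`
admits a retraction. -/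
def IsAbsoluteRetract {S : Signature} (V : SAlgebra S → Prop) (R : SAlgebra S) : Prop :=
  ∀ A : SAlgebra S, V A → ∀ e : SHom R A, Function.Injective e.toFun →
    ∃ p : SHom A R, ∀ x, p.toFun (e.toFun x) = x

/-- An embedding is essential iff every congruence of the codomain restricting
trivially is trivial. -/
def IsEssential {S : Signature} {A B : SAlgebra S} (e : SHom A B) : Prop :=
  ∀ θ : SCon B, SCon.comap e θ = ⊥ → θ = ⊥

/-- A congruence `α` is dense: any congruence meeting it trivially is trivial. -/
def DenseCon {S : Signature} {A : SAlgebra S} (α : SCon A) : Prop :=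
  ∀ θ : SCon A, θ ⊓ α = ⊥ → θ = ⊥

/-- The setoid underlying a congruence. -/
def SCon.setoid {S : Signature} {A : SAlgebra S} (θ : SCon A) : Setoid A.carrier :=
  ⟨θ.r, θ.iseqv⟩

/-- Quotient algebra. -/
noncomputable def SAlgebra.quot {S : Signature} (A : SAlgebra S) (θ : SCon A) : SAlgebra S where
  carrier := Quotient θ.setoid
  interp o x := Quotient.mk θ.setoid (A.interp o fun i => (x i).out)

theorem SCon.out_rel {S : Signature} {A : SAlgebra S} (θ : SCon A) (a : A.carrier) :
    θ.r (Quotient.out (Quotient.mk θ.setoid a)) a :=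
  @Quotient.exact _ θ.setoid _ _ (Quotient.out_eq _)

/-- The canonical quotient homomorphism. -/
def SHom.quotHom {S : Signature} (A : SAlgebra S) (θ : SCon A) : SHom A (A.quot θ) where
  toFun := Quotient.mk θ.setoid
  map o x := Quotient.sound (θ.compat o _ _ fun i => θ.iseqv.symm (θ.out_rel (x i)))

/-- Product map of a family of homomorphisms. -/
def SHom.piMap {S : Signature} {ι : Type} {A B : ι → SAlgebra S} (f : ∀ i, SHom (A i) (B i)) :
    SHom (SAlgebra.pi A) (SAlgebra.pi B) where
  toFun x i := (f i).toFun (x i)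
  map o x := funext fun i => (f i).map o fun j => x j i

/-- The congruence `φ/θ` on the quotient `A/θ`, for `θ ≤ φ`. -/
def SCon.quotCon {S : Signature} {A : SAlgebra S} (θ φ : SCon A) (h : θ ≤ φ) :
    SCon (A.quot θ) where
  r a b := φ.r a.out b.out
  iseqv := ⟨fun _ => φ.iseqv.refl _, φ.iseqv.symm, φ.iseqv.trans⟩
  compat o x y hxy := by
    have hx := h _ _ (θ.out_rel (A.interp o fun i => (x i).out))
    have hy := h _ _ (θ.out_rel (A.interp o fun i => (y i).out))
    exact φ.iseqv.trans hx (φ.iseqv.trans (φ.compat o _ _ hxy) (φ.iseqv.symm hy))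

/-- Finitely subdirectly irreducible: `⊥` is meet irreducible in the congruence lattice. -/
def IsFSI {S : Signature} (A : SAlgebra S) : Prop :=
  ∀ θ φ : SCon A, θ ⊓ φ = ⊥ → θ = ⊥ ∨ φ = ⊥

/-- Subdirectly irreducible: the congruence lattice has a monolith. -/
def IsSubdirectlyIrreducible {S : Signature} (A : SAlgebra S) : Prop :=
  ∃ μ : SCon A, μ ≠ ⊥ ∧ ∀ θ : SCon A, θ ≠ ⊥ → μ ≤ θ

section Aux

variable {S : Signature} {A : SAlgebra S}

/-- The equality congruence. -/
def SCon.eqCon (A : SAlgebra S) : SCon A where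
  r := Eq
  iseqv := ⟨fun _ => rfl, Eq.symm, Eq.trans⟩
  compat o x y h := by rw [funext h]

theorem SCon.bot_r_iff {x y : A.carrier} : (⊥ : SCon A).r x y ↔ x = y := by
  constructor
  · exact fun h => (bot_le : (⊥ : SCon A) ≤ SCon.eqCon A) x y h
  · rintro rfl; exact (⊥ : SCon A).iseqv.refl x

theorem SCon.eq_bot_iff'' (θ : SCon A) : θ = ⊥ ↔ ∀ x y, θ.r x y → x = y := by
  constructor
  · rintro rfl x y h; exact SCon.bot_r_iff.1 h
  · intro h
    refine le_antisymm (fun x y hxy => ?_) bot_le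
    rcases h x y hxy with rfl
    exact (⊥ : SCon A).iseqv.refl x

theorem SCon.chain_finite_ub {c : Set (SCon A)} (hc : IsChain (· ≤ ·) c) {θ₀ : SCon A}
    (h₀ : θ₀ ∈ c) :
    ∀ (m : ℕ) (g : Fin m → SCon A), (∀ i, g i ∈ c) → ∃ θ ∈ c, ∀ i, g i ≤ θ := by
  intro m
  induction m with
  | zero => exact fun g _ => ⟨θ₀, h₀, fun i => i.elim0⟩
  | succ k ih =>
    intro g hg
    obtain ⟨θ, hθc, hθ⟩ := ih (fun i => g i.succ) fun i => hg _
    rcases hc.total hθc (hg 0) with h | h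
    · exact ⟨g 0, hg 0, fun i => Fin.cases le_rfl (fun j => (hθ j).trans h) i⟩
    · exact ⟨θ, hθc, fun i => Fin.cases h (fun j => hθ j) i⟩

/-- The union of a nonempty chain of congruences is a congruence. -/
def SCon.chainSup (c : Set (SCon A)) (hc : IsChain (· ≤ ·) c) {θ₀ : SCon A} (h₀ : θ₀ ∈ c) :
    SCon A where
  r x y := ∃ θ ∈ c, θ.r x y
  iseqv := by
    refine ⟨fun x => ⟨θ₀, h₀, θ₀.iseqv.refl x⟩, ?_, ?_⟩
    · rintro x y ⟨θ, hθ, h⟩; exact ⟨θ, hθ, θ.iseqv.symm h⟩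
    · rintro x y z ⟨θ₁, h₁, ha⟩ ⟨θ₂, h₂, hb⟩
      rcases hc.total h₁ h₂ with h | h
      · exact ⟨θ₂, h₂, θ₂.iseqv.trans (h _ _ ha) hb⟩
      · exact ⟨θ₁, h₁, θ₁.iseqv.trans ha (h _ _ hb)⟩
  compat o x y h := by
    choose g hgc hgr using h
    obtain ⟨θ, hθc, hθ⟩ := SCon.chain_finite_ub hc h₀ _ g hgc
    exact ⟨θ, hθc, θ.compat o x y fun i => hθ i _ _ (hgr i)⟩

end Aux

/-- Every subdirect embedding `A → ∏ Aᵢ` can be refined to a subdirect product-essential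
embedding `A → ∏ Aᵢ/φᵢ`. -/
theorem subdirect_refines_to_product_essential {S : Signature}
    (n : ℕ) (A : SAlgebra S) (Ai : Fin n → SAlgebra S)
    (e : SHom A (SAlgebra.pi Ai)) (hinj : Function.Injective e.toFun)
    (hsub : ∀ i, Function.Surjective fun x => e.toFun x i) :
    ∃ φ : ∀ i, SCon (Ai i),
      let f := SHom.comp (SHom.piMap fun i => SHom.quotHom (Ai i) (φ i)) e
      Function.Injective f.toFun ∧
      (∀ i, Function.Surjective fun x => f.toFun x i) ∧
      (∀ ψ : ∀ i, SCon ((Ai i).quot (φ i)),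
        SCon.comap f (SCon.piCon ψ) = ⊥ → ∀ i, ψ i = ⊥) := by
  classical
  -- The pullback-trivial condition on a tuple of congruences.
  set P : (∀ i, SCon (Ai i)) → Prop :=
    fun φ => ∀ x y : A.carrier, (∀ i, (φ i).r (e.toFun x i) (e.toFun y i)) → x = y with hPdef
  have hPanti : ∀ φ φ' : ∀ i, SCon (Ai i), (∀ i, φ i ≤ φ' i) → P φ' → P φ := by
    intro φ φ' hle h x y hr
    exact h x y fun i => hle i _ _ (hr i)
  have hPbot : P (fun _ => ⊥) := by
    intro x y h
    exact hinj (funext fun i => SCon.bot_r_iff.1 (h i))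
  -- successive Zorn construction
  have key : ∀ k : ℕ, k ≤ n → ∃ φ : ∀ i, SCon (Ai i),
      (∀ j : Fin n, k ≤ j.val → φ j = ⊥) ∧ P φ ∧
      ∀ j : Fin n, j.val < k → ∀ ψ, φ j ≤ ψ → P (Function.update φ j ψ) → ψ = φ j := by
    intro k
    induction k with
    | zero =>
      exact fun _ => ⟨fun _ => ⊥, fun _ _ => rfl, hPbot,
        fun j hj => absurd hj (Nat.not_lt_zero _)⟩
    | succ k ih =>
      intro hk
      obtain ⟨φ, hbot, hP, hmax⟩ := ih (Nat.le_of_succ_le hk)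
      set i : Fin n := ⟨k, hk⟩ with hi
      have hφi : φ i = ⊥ := hbot i le_rfl
      have hmem : φ i ∈ {ψ : SCon (Ai i) | P (Function.update φ i ψ)} := by
        show P (Function.update φ i (φ i))
        rw [Function.update_eq_self]
        exact hP
      have hub : ∀ c ⊆ {ψ : SCon (Ai i) | P (Function.update φ i ψ)},
          IsChain (· ≤ ·) c → ∀ y ∈ c,
          ∃ ub ∈ {ψ : SCon (Ai i) | P (Function.update φ i ψ)}, ∀ z ∈ c, z ≤ ub := by
        intro c hcs hch y hy
        refine ⟨SCon.chainSup c hch hy, ?_, fun z hz a b hab => ⟨z, hz, hab⟩⟩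
        intro x z hr
        have hri := hr i
        rw [Function.update_self] at hri
        obtain ⟨θ, hθc, hθr⟩ := hri
        refine hcs hθc x z fun j => ?_
        by_cases hji : j = i
        · subst hji; rw [Function.update_self]; exact hθr
        · rw [Function.update_of_ne hji]
          have := hr j
          rwa [Function.update_of_ne hji] at this
      obtain ⟨m, him, hm⟩ :=
        zorn_le_nonempty₀ {ψ : SCon (Ai i) | P (Function.update φ i ψ)} hub (φ i) hmem
      · refine ⟨Function.update φ i m, ?_, hm.1, ?_⟩
        · intro j hj
          have hne : j ≠ i := by
            intro h; rw [h] at hj; exact absurd hj (by simp [hi])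
          rw [Function.update_of_ne hne]
          exact hbot j (Nat.le_of_succ_le hj)
        · intro j hj ψ hle hPup
          by_cases hji : j = i
          · subst hji
            rw [Function.update_idem] at hPup
            rw [Function.update_self] at hle ⊢
            exact le_antisymm (hm.2 hPup hle) hle
          · have hjk : j.val < k := by
              rcases Nat.lt_succ_iff_lt_or_eq.1 hj with h | h
              · exact h
              · exact absurd (Fin.ext h : j = i) hji
            rw [Function.update_of_ne hji] at hle ⊢
            refine hmax j hjk ψ hle ?_
            refine hPanti _ _ (fun l => ?_) hPup
            by_cases hlj : l = j
            · subst hlj; rw [Function.update_self, Function.update_self]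
            · show (Function.update φ j ψ) l ≤ (Function.update (Function.update φ i m) j ψ) l
              rw [Function.update_of_ne hlj ψ φ,
                Function.update_of_ne hlj ψ (Function.update φ i m)]
              by_cases hli : l = i
              · subst hli
                rw [Function.update_self, hφi]
                exact bot_le
              · rw [Function.update_of_ne hli]
  -- conclusion
  obtain ⟨φ, -, hP, hmax⟩ := key n le_rfl
  refine ⟨φ, ?_, ?_, ?_⟩
  · intro x y h
    refine hP x y fun i => ?_
    exact Quotient.exact (congrFun h i)
  · intro i q
    obtain ⟨a, rfl⟩ := Quotient.exists_rep q
    obtain ⟨x, hx⟩ := hsub i a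
    exact ⟨x, by
      show Quotient.mk (φ i).setoid (e.toFun x i) = _
      rw [show e.toFun x i = a from hx]⟩
  · intro ψ hcomap i
    set f := SHom.comp (SHom.piMap fun i => SHom.quotHom (Ai i) (φ i)) e with hf
    set ψ' : ∀ j, SCon (Ai j) :=
      fun j => SCon.comap (SHom.quotHom (Ai j) (φ j)) (ψ j) with hψ'
    have hφψ' : ∀ j, φ j ≤ ψ' j := by
      intro j a b hab
      show (ψ j).r (Quotient.mk (φ j).setoid a) (Quotient.mk (φ j).setoid b)
      rw [Quotient.sound (hab : (φ j).setoid.r a b)]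
      exact (ψ j).iseqv.refl _
    have hPψ' : P ψ' := by
      intro x y hr
      have h2 : (⊥ : SCon A).r x y := by
        rw [← hcomap]
        exact fun j => hr j
      exact SCon.bot_r_iff.1 h2
    have hψ'eq : ψ' i = φ i := by
      refine hmax i i.isLt (ψ' i) (hφψ' i) ?_
      refine hPanti _ _ (fun l => ?_) hPψ'
      by_cases hli : l = i
      · subst hli; rw [Function.update_self]
      · rw [Function.update_of_ne hli]; exact hφψ' l
    rw [SCon.eq_bot_iff'']
    intro p q hpq
    obtain ⟨a, rfl⟩ := Quotient.exists_rep p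
    obtain ⟨b, rfl⟩ := Quotient.exists_rep q
    have hab : (ψ' i).r a b := hpq
    rw [hψ'eq] at hab
    exact Quotient.sound (hab : (φ i).setoid.r a b)
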